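/- For every a ∈ IS_n, rank(a) equals the minimum of rank(f) over all idempotents f of (IS_n, *) such that a belongs to the principal two-sided ideal IS_n * f * IS_n, provided rank(a) ≤ k (i.e. a is decomposable). -/

import Mathlib

open Equiv

/-- `IS n` : the symmetric inverse semigroup on `{1,…,n}`, modeled as partial
equivalences of `Fin n`.  Composition is left-to-right: `(x.trans y) t = y (x t)`. -/
abbrev IS (n : ℕ) := PEquiv (Fin n) (Fin n)

/-- The domain of a partial injective transformation. -/
def sdom {n : ℕ} (x : IS n) : Set (Fin n) := {a | (x a).isSome}

/-- The image of a partial injective transformation. -/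
def sim {n : ℕ} (x : IS n) : Set (Fin n) := {b | (x.symm b).isSome}

/-- The rank of a partial injective transformation: the cardinality of its image. -/
noncomputable def srank {n : ℕ} (x : IS n) : ℕ := Nat.card (sim x)

/-- The set `A = {1,…,k}` inside `Fin n`, i.e. the first `k` elements. -/
def SetA (n k : ℕ) : Set (Fin n) := {i | (i : ℕ) < k}

/-- The idempotent `e` acting identically on `A`, with `dom e = im e = A`. -/
def sandE (n k : ℕ) : IS n where
  toFun i := if (i : ℕ) < k then some i else none
  invFun i := if (i : ℕ) < k then some i else none
  inv a b := by
    split_ifs with h1 h2 <;>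
      simp_all [Option.mem_def, eq_comm] <;> rintro rfl <;> omega

/-- The sandwich multiplication `x * y = x e y` (left-to-right composition). -/
def smul (n k : ℕ) (x y : IS n) : IS n := (x.trans (sandE n k)).trans y

lemma trans_apply' {n : ℕ} (p q : IS n) (i : Fin n) : (p.trans q) i = (p i).bind q := rfl

lemma sandE_apply (n k : ℕ) (i : Fin n) :
    sandE n k i = if (i : ℕ) < k then some i else none := rfl

lemma sandE_symm_apply (n k : ℕ) (i : Fin n) :
    (sandE n k).symm i = if (i : ℕ) < k then some i else none := rfl

lemma symm_get_eq {α β : Type*} (f : α ≃. β) {a : α} (h : (f a).isSome) :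
    f.symm ((f a).get h) = some a :=
  (PEquiv.eq_some_iff f).2 (Option.some_get h).symm

lemma srank_sandE (n r : ℕ) (hrn : r ≤ n) : srank (sandE n r) = r := by
  unfold srank
  apply Nat.card_eq_of_equiv_fin
  refine ⟨fun b => ⟨b.1.1, ?_⟩, fun j => ⟨⟨j.1, lt_of_lt_of_le j.2 hrn⟩, ?_⟩, ?_, ?_⟩
  · have := b.2
    simp only [sim, Set.mem_setOf_eq, sandE_symm_apply] at this
    by_contra hc
    simp [hc] at this
  · simp [sim, Set.mem_setOf_eq, sandE_symm_apply, j.2]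
  · intro b; ext; rfl
  · intro j; ext; rfl

lemma sandE_idem (n k r : ℕ) (hrk : r ≤ k) :
    smul n k (sandE n r) (sandE n r) = sandE n r := by
  ext i
  simp only [smul, trans_apply', sandE_apply]
  split_ifs with h
  · simp [Option.bind, sandE_apply, h, lt_of_lt_of_le h hrk]
  · simp

lemma castLE_eq_iff {n r : ℕ} (hrn : r ≤ n) (v : Fin r) (j : Fin n) (hj : (j : ℕ) < r) :
    Fin.castLE hrn v = j ↔ v = ⟨j.1, hj⟩ := by
  constructor <;> intro h <;> subst h <;> ext <;> simp

lemma exists_xy (n k r : ℕ) (hrn : r ≤ n) (hrk : r ≤ k) (a : IS n)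
    (eD : (sdom a) ≃ Fin r) :
    ∃ x y : IS n, smul n k (smul n k x (sandE n r)) y = a := by
  refine ⟨⟨fun i => if h : (a i).isSome then some (Fin.castLE hrn (eD ⟨i, h⟩)) else none,
          fun j => if h : (j : ℕ) < r then some (eD.symm ⟨j.1, h⟩).1 else none, ?_⟩,
         ⟨fun j => if h : (j : ℕ) < r then a (eD.symm ⟨j.1, h⟩).1 else none,
          fun b => if h : (a.symm b).isSome then
            some (Fin.castLE hrn (eD ⟨(a.symm b).get h, by
              have := symm_get_eq a.symm h
              simp only [PEquiv.symm_symm] at this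
              simp [sdom, Set.mem_setOf_eq, this]⟩)) else none, ?_⟩, ?_⟩
  · -- inv for x
    intro i j
    split_ifs with h1 h2 h2 h2
    · simp only [Option.mem_def, Option.some.injEq]
      constructor
      · rintro rfl
        have he : eD ⟨(eD.symm ⟨j.1, h1⟩).1, h2⟩ = ⟨j.1, h1⟩ := by
          rw [show (⟨(eD.symm ⟨j.1, h1⟩).1, h2⟩ : sdom a) = eD.symm ⟨j.1, h1⟩ from rfl]
          simp
        rw [he]
        ext; rfl
      · rintro rfl
        have he : (⟨((Fin.castLE hrn (eD ⟨i, h2⟩) : Fin n) : ℕ), h1⟩ : Fin r)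
            = eD ⟨i, h2⟩ := by ext; simp
        rw [he, Equiv.symm_apply_apply]
    · simp only [Option.mem_def, Option.some.injEq]
      constructor
      · rintro rfl
        exact absurd (eD.symm ⟨j.1, h1⟩).2 h2
      · intro h; exact absurd h (by simp)
    · simp only [Option.mem_def, Option.some.injEq]
      constructor
      · intro h; exact absurd h (by simp)
      · rintro rfl
        exact absurd (show ((Fin.castLE hrn (eD ⟨i, h2⟩) : Fin n) : ℕ) < r from
          (eD ⟨i, h2⟩).isLt) h1
    · simp
  · -- inv for y
    intro j b
    split_ifs with hb hj hj hj
    · obtain ⟨d, hd⟩ := Option.isSome_iff_exists.1 hb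
      have had : a d = some b := (PEquiv.eq_some_iff a).1 hd
      simp only [Option.mem_def, Option.some.injEq, hd, Option.get_some]
      rw [castLE_eq_iff hrn _ j hj, Equiv.apply_eq_iff_eq_symm_apply]
      constructor
      · intro h
        rw [← h]
        exact had
      · intro h
        have h2 : a.symm b = some (eD.symm ⟨j.1, hj⟩).1 := (PEquiv.eq_some_iff a).2 h
        rw [hd] at h2
        exact Subtype.ext (Option.some_injective _ h2)
    · simp only [Option.mem_def, Option.some.injEq]
      constructor
      · rintro rfl
        exact absurd (show ((Fin.castLE hrn (eD ⟨(a.symm b).get hb, _⟩) : Fin n) : ℕ) < r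
          from (eD _).isLt) hj
      · intro h; exact absurd h (by simp)
    · constructor
      · intro h; exact absurd h (by simp)
      · intro h
        have hsb : a.symm b = some (eD.symm ⟨j.1, hj⟩).1 := (PEquiv.eq_some_iff a).2 h
        exact absurd (by simp [hsb] : (a.symm b).isSome) hb
    · simp
  · -- the composite equals a
    refine PEquiv.ext fun i => ?_
    simp only [smul, trans_apply', PEquiv.coe_mk]
    by_cases h : (a i).isSome
    · rw [dif_pos h]
      have hc1 : ((Fin.castLE hrn (eD ⟨i, h⟩) : Fin n) : ℕ) < r := (eD ⟨i, h⟩).isLt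
      rw [Option.bind_some, sandE_apply, if_pos (lt_of_lt_of_le hc1 hrk),
          Option.bind_some, sandE_apply, if_pos hc1,
          Option.bind_some, sandE_apply, if_pos (lt_of_lt_of_le hc1 hrk),
          Option.bind_some, dif_pos hc1]
      have he : (⟨((Fin.castLE hrn (eD ⟨i, h⟩) : Fin n) : ℕ), hc1⟩ : Fin r)
          = eD ⟨i, h⟩ := by ext; simp
      rw [he, Equiv.symm_apply_apply]
    · rw [dif_neg h, Option.bind_none, Option.bind_none, Option.bind_none, Option.bind_none]
      exact (Option.not_isSome_iff_eq_none.1 h).symm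

lemma isSome_of_bind {α β : Type*} {o : Option α} {g : α → Option β}
    (h : (o.bind g).isSome) : o.isSome := by
  cases o <;> simp_all

lemma card_sdom {n : ℕ} (x : IS n) : Nat.card (sdom x) = srank x := by
  apply Nat.card_congr
  exact {
    toFun := fun i => ⟨(x i.1).get i.2, by
      have := symm_get_eq x i.2
      simp [sim, Set.mem_setOf_eq, this]⟩
    invFun := fun b => ⟨(x.symm b.1).get b.2, by
      have := symm_get_eq x.symm b.2
      simp only [PEquiv.symm_symm] at this
      simp [sdom, Set.mem_setOf_eq, this]⟩
    left_inv := fun i => by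
      ext
      have h : x.symm ((x i.1).get i.2) = some i.1 := symm_get_eq x i.2
      simp [h]
    right_inv := fun b => by
      ext
      have h : x ((x.symm b.1).get b.2) = some b.1 := by
        have := symm_get_eq x.symm b.2
        simpa using this
      simp [h] }

lemma srank_trans_le_right {n : ℕ} (p q : IS n) : srank (p.trans q) ≤ srank q := by
  unfold srank
  rw [Nat.card_coe_set_eq, Nat.card_coe_set_eq]
  apply Set.ncard_le_ncard _ (Set.toFinite _)
  intro b hb
  simp only [sim, Set.mem_setOf_eq, PEquiv.symm_trans_rev] at hb ⊢
  exact isSome_of_bind hb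

lemma srank_trans_le_left {n : ℕ} (p q : IS n) : srank (p.trans q) ≤ srank p := by
  rw [← card_sdom, ← card_sdom p]
  rw [Nat.card_coe_set_eq, Nat.card_coe_set_eq]
  apply Set.ncard_le_ncard _ (Set.toFinite _)
  intro i hi
  simp only [sdom, Set.mem_setOf_eq] at hi ⊢
  exact isSome_of_bind hi

/-- for decomposable `a` (i.e. `rank a ≤ k`), `rank a` is the
minimum of `rank f` over idempotents `f` of `(IS_n, *)` with
`a ∈ IS_n * f * IS_n`. -/
theorem rank_eq_min_idempotent_rank (n k : ℕ) (hk : 1 ≤ k) (hkn : k ≤ n)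
    (a : IS n) (ha : srank a ≤ k) :
    IsLeast {r : ℕ | ∃ f : IS n, smul n k f f = f ∧ srank f = r ∧
      ∃ x y : IS n, smul n k (smul n k x f) y = a} (srank a) := by
  constructor
  · have hrn : srank a ≤ n := le_trans ha hkn
    haveI : Fintype (sdom a) := Fintype.ofFinite _
    have hcard : Fintype.card (sdom a) = srank a := by
      rw [← Nat.card_eq_fintype_card, card_sdom]
    obtain ⟨x, y, hxy⟩ := exists_xy n k (srank a) hrn ha a (Fintype.equivFinOfCardEq hcard)
    exact ⟨sandE n (srank a), sandE_idem n k (srank a) ha,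
      srank_sandE n (srank a) hrn, x, y, hxy⟩
  · rintro r ⟨f, hf, rfl, x, y, rfl⟩
    have h1 : smul n k (smul n k x f) y
        = ((((x.trans (sandE n k)).trans f).trans (sandE n k)).trans y) := rfl
    rw [h1]
    exact le_trans (srank_trans_le_left _ _) (le_trans (srank_trans_le_left _ _)
      (srank_trans_le_right _ _))
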